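/- Let D be a central division algebra over a field C of characteristic p > 0 and let (S,∘) be a division ring (not associative) such that: (1) S contains D as a subring, S is a free left D-module of rank p, and there exists t ∈ S such that 1, t, t², …, t^{p−1} is a D-basis of S, where t^{i+1} := t∘tⁱ and t⁰ = 1 for 0 ≤ i < p; (2) for every nonzero a ∈ D there is a' ∈ D with t∘a = a∘t + a'; (3) for all a,b,c ∈ D and all i,j,k with i+j < p and k < p, the associator [a∘tⁱ, b∘tʲ, c∘tᵏ] vanishes; (4) t^p = t + d for some nonzero d ∈ D (with t^p = t∘t^{p−1}). Then δ(a) := t∘a − a∘t defines a derivation on D, and S is isomorphic to the Petit algebra S_f for the irreducible polynomial f(t) = t^p − t − d ∈ D[t;δ]; moreover every automorphism H ∈ Aut_F(S_f) restricts to an automorphism of D, where F = Const(δ) ∩ C. -/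

import Mathlib

open Finsupp

section Defs

variable {D R : Type*}

/-- `δ` is a derivation on the (possibly noncommutative) ring `D`. -/
def IsDeriv [Ring D] (δ : D → D) : Prop :=
  (∀ a b, δ (a + b) = δ a + δ b) ∧ ∀ a b, δ (a * b) = a * δ b + δ a * b

/-- `(R, i, t, coeff)` realizes the differential polynomial ring `D[t;δ]`:
`t * a = a * t + δ a` for `a ∈ D`, and every element of `R` is uniquely of
the form `∑ aₙ tⁿ`, the `aₙ` being recorded by the additive equivalence `coeff`. -/
def IsDiffPolyRing [Ring D] [Ring R] (δ : D → D) (i : D →+* R) (t : R)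
    (coeff : R ≃+ (ℕ →₀ D)) : Prop :=
  (∀ a : D, t * i a = i a * t + i (δ a)) ∧
    ∀ (n : ℕ) (a : D), coeff.symm (Finsupp.single n a) = i a * t ^ n

/-- `r` has degree `< m`. -/
def DegLt [Ring D] [Ring R] (coeff : R ≃+ (ℕ →₀ D)) (m : ℕ) (r : R) : Prop :=
  ∀ n, m ≤ n → coeff r n = 0

/-- `f` is monic of degree `m`. -/
def MonicDeg [Ring D] [Ring R] (coeff : R ≃+ (ℕ →₀ D)) (m : ℕ) (f : R) : Prop :=
  coeff f m = 1 ∧ ∀ n, m < n → coeff f n = 0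

/-- The carrier of the Petit algebra `S_f`: all polynomials of degree `< m`. -/
def SfSet [Ring D] [Ring R] (coeff : R ≃+ (ℕ →₀ D)) (m : ℕ) : Set R :=
  {r | DegLt coeff m r}

/-- `mul` is the Petit multiplication: `mul x y = x·y mod_r f`, i.e. `mul x y`
has degree `< m` and differs from `x·y` by a left multiple of `f`. -/
def IsPetitMul [Ring D] [Ring R] (coeff : R ≃+ (ℕ →₀ D)) (f : R) (m : ℕ)
    (mul : R → R → R) : Prop :=
  ∀ x y : R, DegLt coeff m (mul x y) ∧ ∃ q : R, x * y = q * f + mul x y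

/-- `f` is right semi-invariant: `f·a ∈ D·f` for all `a ∈ D`. -/
def RightSemiInvariant [Ring D] [Ring R] (i : D →+* R) (f : R) : Prop :=
  ∀ a : D, ∃ b : D, f * i a = i b * f

/-- `f` is two-sided (invariant): the left ideal `Rf` is a two-sided ideal. -/
def TwoSidedElem [Ring R] (f : R) : Prop :=
  ∀ r : R, ∃ q : R, f * r = q * f

/-- `f` (of degree `m`) is irreducible: it has no factorization into factors
of degree `< m`. -/
def IrredDeg [Ring D] [Ring R] (coeff : R ≃+ (ℕ →₀ D)) (m : ℕ) (f : R) : Prop :=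
  ¬∃ g h : R, f = g * h ∧ DegLt coeff m g ∧ DegLt coeff m h

/-- `f` (of degree `m`) is irreducible as a polynomial with coefficients in
the subfield `Fset` of `D`. -/
def IrredOver [Ring D] [Ring R] (coeff : R ≃+ (ℕ →₀ D)) (Fset : Set D) (m : ℕ)
    (f : R) : Prop :=
  ¬∃ g h : R, f = g * h ∧ DegLt coeff m g ∧ DegLt coeff m h ∧
    (∀ n, coeff g n ∈ Fset) ∧ ∀ n, coeff h n ∈ Fset

/-- Left nucleus of the algebra `(S, mul)`. -/
def LeftNuc [Ring R] (S : Set R) (mul : R → R → R) : Set R :=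
  {x ∈ S | ∀ y ∈ S, ∀ z ∈ S, mul (mul x y) z = mul x (mul y z)}

/-- Middle nucleus of the algebra `(S, mul)`. -/
def MidNuc [Ring R] (S : Set R) (mul : R → R → R) : Set R :=
  {x ∈ S | ∀ y ∈ S, ∀ z ∈ S, mul (mul y x) z = mul y (mul x z)}

/-- Right nucleus of the algebra `(S, mul)`. -/
def RightNuc [Ring R] (S : Set R) (mul : R → R → R) : Set R :=
  {x ∈ S | ∀ y ∈ S, ∀ z ∈ S, mul (mul y z) x = mul y (mul z x)}

/-- `(S, mul)` is a division algebra: all nonzero left and right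
multiplications are bijective. -/
def IsDivAlg [Ring R] (S : Set R) (mul : R → R → R) : Prop :=
  ∀ x ∈ S, x ≠ 0 → Set.BijOn (mul x) S S ∧ Set.BijOn (fun y => mul y x) S S

/-- `(S, mul)` is associative. -/
def IsAssocOn [Ring R] (S : Set R) (mul : R → R → R) : Prop :=
  ∀ x ∈ S, ∀ y ∈ S, ∀ z ∈ S, mul (mul x y) z = mul x (mul y z)

/-- The constants of `δ`. -/
def ConstSet [Ring D] (δ : D → D) : Set D := {a | δ a = 0}

/-- The center of `D`. -/
def CenterSet (D : Type*) [Ring D] : Set D := {a | ∀ b, a * b = b * a}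

/-- `F₀ = Const(δ) ∩ C(D)`. -/
def F0Set [Ring D] (δ : D → D) : Set D := ConstSet δ ∩ CenterSet D

/-- The elements of the Petit algebra all of whose coefficients lie in `Fset`,
e.g. `Fset ⊕ Fset·t ⊕ ⋯ ⊕ Fset·t^{m-1}`. -/
def SubCoeffSet [Ring D] [Ring R] (coeff : R ≃+ (ℕ →₀ D)) (m : ℕ)
    (Fset : Set D) : Set R :=
  {r | DegLt coeff m r ∧ ∀ n, coeff r n ∈ Fset}

/-- `S ⊆ R` has dimension `k` over the subfield `Fset ⊆ D` (acting through `i`):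
there is an `Fset`-basis of size `k`. -/
def HasDim [Ring D] [Ring R] (Fset : Set D) (i : D →+* R) (S : Set R) (k : ℕ) : Prop :=
  ∃ b : Fin k → R, (∀ j, b j ∈ S) ∧
    ∀ x ∈ S, ∃! c : Fin k → D, (∀ j, c j ∈ Fset) ∧ x = ∑ j, i (c j) * b j

/-- `S ⊆ D` has dimension `k` over the subfield `Fset ⊆ D`. -/
def HasDimIn [Ring D] (Fset : Set D) (S : Set D) (k : ℕ) : Prop :=
  ∃ b : Fin k → D, (∀ j, b j ∈ S) ∧
    ∀ x ∈ S, ∃! c : Fin k → D, (∀ j, c j ∈ Fset) ∧ x = ∑ j, c j * b j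

/-- Substitution of `x` for `t` in `r = ∑ aₙ tⁿ`. -/
noncomputable def substT [Ring D] [Ring R] (coeff : R ≃+ (ℕ →₀ D)) (i : D →+* R) (r x : R) : R :=
  (coeff r).sum fun n c => i c * x ^ n

/-- `V_f(b)`: the constant `f(t) − f(t−b)`. -/
noncomputable def Vf [Ring D] [Ring R] (coeff : R ≃+ (ℕ →₀ D)) (i : D →+* R) (t f : R) (b : D) : D :=
  coeff (f - substT coeff i f (t - i b)) 0

/-- `V_p(b)`: the constant with `(t−b)^p = t^p − V_p(b)`. -/
noncomputable def Vp [Ring D] [Ring R] (coeff : R ≃+ (ℕ →₀ D)) (i : D →+* R) (t : R) (p : ℕ)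
    (b : D) : D :=
  coeff (t ^ p - (t - i b) ^ p) 0

/-- For commutative coefficients, `V_p(b) = b^p + δ^{p−1}(b)`. -/
def VpFun [Ring D] (δ : D → D) (p : ℕ) : D → D := fun b => b ^ p + δ^[p - 1] b

/-- `V(a) = V_{p^e}(a) + c₁ V_{p^{e−1}}(a) + ⋯ + c_e a`, computed with
`V_p(b) = b^p + δ^{p−1}(b)` (commutative case). -/
def Vg [Ring D] (δ : D → D) (p e : ℕ) (c : Fin e → D) : D → D :=
  fun a => (VpFun δ p)^[e] a + ∑ j : Fin e, c j * (VpFun δ p)^[e - 1 - (j : ℕ)] a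

/-- `V(a) = V_{p^e}(a) + c₁ V_{p^{e−1}}(a) + ⋯ + c_e a`, with `V_p` defined by
the identity `(t−b)^p = t^p − V_p(b)` in `D[t;δ]`. -/
noncomputable def VgR [Ring D] [Ring R] (coeff : R ≃+ (ℕ →₀ D)) (i : D →+* R) (t : R) (p e : ℕ)
    (c : Fin e → D) : D → D :=
  fun a => (Vp coeff i t p)^[e] a + ∑ j : Fin e, c j * (Vp coeff i t p)^[e - 1 - (j : ℕ)] a

/-- The map `G_{id,−a}` sending `∑ bₙ tⁿ` to `∑ bₙ (t−a)ⁿ`. -/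
noncomputable def Gmap [Ring D] [Ring R] (coeff : R ≃+ (ℕ →₀ D)) (i : D →+* R) (t : R) (a : D) :
    R → R :=
  fun r => substT coeff i r (t - i a)

/-- `H` is an isomorphism of `Fset`-algebras from `(S, mul)` onto `(S', mul')`. -/
def IsAlgIso [Ring D] [Ring R] (Fset : Set D) (i : D →+* R) (S S' : Set R)
    (mul mul' : R → R → R) (H : R → R) : Prop :=
  Set.BijOn H S S' ∧ (∀ x ∈ S, ∀ y ∈ S, H (x + y) = H x + H y) ∧
    (∀ x ∈ S, ∀ y ∈ S, H (mul x y) = mul' (H x) (H y)) ∧ H 1 = 1 ∧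
    ∀ a ∈ Fset, ∀ x ∈ S, H (i a * x) = i a * H x

/-- `H` is an `Fset`-algebra automorphism of the Petit algebra `(S, mul)`. -/
def IsAut [Ring D] [Ring R] (Fset : Set D) (i : D →+* R) (S : Set R)
    (mul : R → R → R) (H : R → R) : Prop :=
  IsAlgIso Fset i S S mul mul H

/-- The operator `δ^{p^e} + c₁ δ^{p^{e−1}} + ⋯ + c_e δ` vanishes on `Cset`,
i.e. the `p`-polynomial `t^{p^e} + c₁ t^{p^{e−1}} + ⋯ + c_e t` annihilates `δ|_{Cset}`. -/
def PPolyAnnOn [Ring D] (δ : D → D) (Cset : Set D) (p e : ℕ) (c : Fin e → D) : Prop :=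
  ∀ a ∈ Cset, δ^[p ^ e] a + ∑ j : Fin e, c j * δ^[p ^ (e - 1 - (j : ℕ))] a = 0

/-- `t^{p^e} + c₁ t^{p^{e−1}} + ⋯ + c_e t` (coefficients in `Fset`) is the minimum
`p`-polynomial of `δ` restricted to `Cset`. -/
def IsMinPPoly [Ring D] (δ : D → D) (Cset Fset : Set D) (p e : ℕ)
    (c : Fin e → D) : Prop :=
  (∀ j, c j ∈ Fset) ∧ PPolyAnnOn δ Cset p e c ∧
    ∀ e' : ℕ, e' < e → ∀ c' : Fin e' → D, (∀ j, c' j ∈ Fset) →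
      ¬PPolyAnnOn δ Cset p e' c'

/-- The natural map from `D[X]` to `R`, `∑ aₙ Xⁿ ↦ ∑ aₙ tⁿ`. -/
noncomputable def polyToR [Ring D] [Ring R] (i : D →+* R) (t : R) (q : Polynomial D) : R :=
  q.sum fun n a => i a * t ^ n

/-- The element `f ∈ R` rewritten as an ordinary polynomial in `D[X]`. -/
noncomputable def coeffPoly [Ring D] [Ring R] (coeff : R ≃+ (ℕ →₀ D)) (f : R) : Polynomial D :=
  (coeff f).sum fun n a => Polynomial.C a * Polynomial.X ^ n

/-- The set `T = Fset ⊕ Fset·t ⊕ ⋯ ⊕ Fset·t^{m−1} ⊆ S_f` is isomorphic, as a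
ring, to the quotient `Fset[X]/(f)`: the natural map `θ : ∑ aₙ Xⁿ ↦ ∑ aₙ tⁿ`,
from polynomials over `Fset` of degree `< m` with multiplication given by
reduction mod `f`, is a bijection onto `T` respecting all the operations. -/
def IsPolyQuotIso [Ring D] [Ring R] (Fset : Set D) (i : D →+* R)
    (coeff : R ≃+ (ℕ →₀ D)) (t f : R) (m : ℕ) (mul : R → R → R) (T : Set R) : Prop :=
  Set.BijOn (polyToR i t)
    {q : Polynomial D | (∀ n, q.coeff n ∈ Fset) ∧ q.degree < (m : WithBot ℕ)} T ∧
  (∀ q q' : Polynomial D, polyToR i t (q + q') = polyToR i t q + polyToR i t q') ∧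
  polyToR i t 1 = 1 ∧
  ∀ q ∈ {q : Polynomial D | (∀ n, q.coeff n ∈ Fset) ∧ q.degree < (m : WithBot ℕ)},
    ∀ q' ∈ {q : Polynomial D | (∀ n, q.coeff n ∈ Fset) ∧ q.degree < (m : WithBot ℕ)},
      ∃ s r : Polynomial D, q * q' = s * coeffPoly coeff f + r ∧
        r.degree < (m : WithBot ℕ) ∧
        polyToR i t r = mul (polyToR i t q) (polyToR i t q')

end Defs
section AuxR
variable {D R : Type*} [DivisionRing D] [Ring R]
variable {δ : D → D} {i : D →+* R} {tR : R} {coeff : R ≃+ (ℕ →₀ D)}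

theorem aux_coeff_e (hR : IsDiffPolyRing δ i tR coeff) (n : ℕ) (a : D) :
    coeff (i a * tR ^ n) = Finsupp.single n a := by
  rw [← hR.2]; exact coeff.apply_symm_apply _

theorem aux_decomp (hR : IsDiffPolyRing δ i tR coeff) (r : R) :
    r = ∑ n ∈ (coeff r).support, i (coeff r n) * tR ^ n := by
  conv_lhs => rw [← coeff.symm_apply_apply r, ← Finsupp.sum_single (coeff r)]
  rw [Finsupp.sum, map_sum]
  exact Finset.sum_congr rfl fun n _ => hR.2 n _

theorem aux_coeff_ia (hR : IsDiffPolyRing δ i tR coeff) (a : D) (r : R) (n : ℕ) :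
    coeff (i a * r) n = a * coeff r n := by
  have h : i a * r = ∑ m ∈ (coeff r).support, i (a * coeff r m) * tR ^ m := by
    conv_lhs => rw [aux_decomp hR r]
    rw [Finset.mul_sum]
    exact Finset.sum_congr rfl fun m _ => by rw [← mul_assoc, ← map_mul]
  rw [h, map_sum, Finsupp.finset_sum_apply]
  simp only [aux_coeff_e hR, Finsupp.single_apply]
  rw [Finset.sum_ite_eq' (coeff r).support n fun m => a * coeff r m]
  by_cases hn : n ∈ (coeff r).support
  · rw [if_pos hn]
  · rw [if_neg hn, Finsupp.notMem_support_iff.1 hn, mul_zero]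

theorem aux_coeff_mul_tpow (hR : IsDiffPolyRing δ i tR coeff) (r : R) (k n : ℕ) :
    coeff (r * tR ^ k) n = if k ≤ n then coeff r (n - k) else 0 := by
  have h : r * tR ^ k = ∑ m ∈ (coeff r).support, i (coeff r m) * tR ^ (m + k) := by
    conv_lhs => rw [aux_decomp hR r]
    rw [Finset.sum_mul]
    exact Finset.sum_congr rfl fun m _ => by rw [mul_assoc, pow_add]
  rw [h, map_sum, Finsupp.finset_sum_apply]
  simp only [aux_coeff_e hR, Finsupp.single_apply]
  by_cases hk : k ≤ n
  · rw [if_pos hk]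
    have : ∀ m ∈ (coeff r).support, (if m + k = n then coeff r m else 0)
        = if m = n - k then coeff r m else 0 := by
      intro m _
      congr 1
      simp only [eq_iff_iff]; omega
    rw [Finset.sum_congr rfl this,
      Finset.sum_ite_eq' (coeff r).support (n - k) fun m => coeff r m]
    by_cases hn : n - k ∈ (coeff r).support
    · rw [if_pos hn]
    · rw [if_neg hn, Finsupp.notMem_support_iff.1 hn]
  · rw [if_neg hk]
    refine Finset.sum_eq_zero fun m _ => ?_
    rw [if_neg (by omega)]

theorem aux_degLt_mono {m m' : ℕ} {r : R} (h : DegLt coeff m r) (hmm : m ≤ m') :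
    DegLt coeff m' r := fun n hn => h n (le_trans hmm hn)

theorem aux_degLt_zero_eq {r : R} (h : DegLt coeff 0 r) : r = 0 := by
  have : coeff r = 0 := Finsupp.ext fun n => h n (Nat.zero_le n)
  have := congrArg coeff.symm this
  rwa [coeff.symm_apply_apply, map_zero] at this

theorem aux_degLt_add {m : ℕ} {x y : R} (hx : DegLt coeff m x) (hy : DegLt coeff m y) :
    DegLt coeff m (x + y) := fun n hn => by
  rw [map_add, Finsupp.add_apply, hx n hn, hy n hn, add_zero]

theorem aux_degLt_neg {m : ℕ} {x : R} (hx : DegLt coeff m x) :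
    DegLt coeff m (-x) := fun n hn => by
  rw [map_neg, Finsupp.neg_apply, hx n hn, neg_zero]

theorem aux_degLt_sub {m : ℕ} {x y : R} (hx : DegLt coeff m x) (hy : DegLt coeff m y) :
    DegLt coeff m (x - y) := by
  rw [sub_eq_add_neg]; exact aux_degLt_add hx (aux_degLt_neg hy)

theorem aux_degLt_sum {m : ℕ} {α : Type*} {s : Finset α} {g : α → R}
    (h : ∀ a ∈ s, DegLt coeff m (g a)) : DegLt coeff m (∑ a ∈ s, g a) := fun n hn => by
  rw [map_sum, Finsupp.finset_sum_apply]
  exact Finset.sum_eq_zero fun a ha => h a ha n hn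

theorem aux_degLt_e (hR : IsDiffPolyRing δ i tR coeff) {m k : ℕ} (hk : k < m) (a : D) :
    DegLt coeff m (i a * tR ^ k) := fun n hn => by
  rw [aux_coeff_e hR, Finsupp.single_apply, if_neg (by omega)]

theorem aux_degLt_ia (hR : IsDiffPolyRing δ i tR coeff) {m : ℕ} {r : R} (a : D)
    (h : DegLt coeff m r) : DegLt coeff m (i a * r) := fun n hn => by
  rw [aux_coeff_ia hR, h n hn, mul_zero]

theorem aux_degLt_mul_tpow (hR : IsDiffPolyRing δ i tR coeff) {m : ℕ} {r : R} (k : ℕ)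
    (h : DegLt coeff m r) : DegLt coeff (m + k) (r * tR ^ k) := fun n hn => by
  rw [aux_coeff_mul_tpow hR]
  by_cases hk : k ≤ n
  · rw [if_pos hk]; exact h _ (by omega)
  · rw [if_neg hk]

theorem aux_degLt_tmul (hR : IsDiffPolyRing δ i tR coeff) {m : ℕ} {r : R}
    (h : DegLt coeff m r) : DegLt coeff (m + 1) (tR * r) := by
  have hr : tR * r = ∑ n ∈ (coeff r).support,
      (i (coeff r n) * tR ^ (n + 1) + i (δ (coeff r n)) * tR ^ n) := by
    conv_lhs => rw [aux_decomp hR r]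
    rw [Finset.mul_sum]
    refine Finset.sum_congr rfl fun n _ => ?_
    rw [← mul_assoc, hR.1, add_mul, mul_assoc, ← pow_succ']
  rw [hr]
  refine aux_degLt_sum fun n hn => ?_
  have hnm : n < m := by
    by_contra hc
    exact (Finsupp.mem_support_iff.1 hn) (h n (by omega))
  exact aux_degLt_add (aux_degLt_e hR (by omega) _) (aux_degLt_e hR (by omega) _)

theorem aux_degLt_tpowmul (hR : IsDiffPolyRing δ i tR coeff) {m : ℕ} {r : R} (k : ℕ)
    (h : DegLt coeff m r) : DegLt coeff (m + k) (tR ^ k * r) := by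
  induction k with
  | zero => rw [pow_zero, one_mul]; exact h
  | succ k ih =>
      have := aux_degLt_tmul hR ih
      rw [← mul_assoc, ← pow_succ'] at this
      exact aux_degLt_mono this (by omega)

theorem aux_comm (hR : IsDiffPolyRing δ i tR coeff) (k : ℕ) (a : D) :
    ∃ r, DegLt coeff k r ∧ tR ^ k * i a = i a * tR ^ k + r := by
  induction k with
  | zero => exact ⟨0, fun n _ => by simp, by simp⟩
  | succ k ih =>
      obtain ⟨r, hr, he⟩ := ih
      refine ⟨i (δ a) * tR ^ k + tR * r, aux_degLt_add (aux_degLt_e hR (by omega) _)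
        (aux_degLt_tmul hR hr), ?_⟩
      rw [pow_succ', mul_assoc, he, mul_add, ← mul_assoc, hR.1, add_mul, mul_assoc,
        ← pow_succ']
      rw [add_assoc]

theorem aux_mul_degLt (hR : IsDiffPolyRing δ i tR coeff) {m n : ℕ} {x y : R}
    (hx : DegLt coeff m x) (hy : DegLt coeff (n + 1) y) : DegLt coeff (m + n) (x * y) := by
  have hd : x * y = ∑ a ∈ (coeff x).support, i (coeff x a) * (tR ^ a * y) := by
    conv_lhs => rw [aux_decomp hR x]
    rw [Finset.sum_mul]
    exact Finset.sum_congr rfl fun a _ => by rw [mul_assoc]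
  rw [hd]
  refine aux_degLt_sum fun a ha => ?_
  have ham : a < m := by
    by_contra hc
    exact (Finsupp.mem_support_iff.1 ha) (hx a (by omega))
  exact aux_degLt_ia hR _ (aux_degLt_mono (aux_degLt_tpowmul hR a hy) (by omega))

end AuxR

section More
variable {D R : Type*} [DivisionRing D] [Ring R]
variable {δ : D → D} {i : D →+* R} {tR : R} {coeff : R ≃+ (ℕ →₀ D)}

theorem aux_coeff_mul_top (hR : IsDiffPolyRing δ i tR coeff) {m n : ℕ} {x y : R}
    (hx : DegLt coeff (m+1) x) (hy : DegLt coeff (n+1) y) :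
    coeff (x * y) (m + n) = coeff x m * coeff y n := by
  have hx' : DegLt coeff m (x - i (coeff x m) * tR ^ m) := by
    intro k hk
    rw [map_sub, Finsupp.sub_apply, aux_coeff_e hR, Finsupp.single_apply]
    rcases Nat.eq_or_lt_of_le hk with h | h
    · rw [← h, if_pos rfl, sub_self]
    · rw [hx k (by omega), if_neg (by omega), sub_zero]
  have hy' : DegLt coeff n (y - i (coeff y n) * tR ^ n) := by
    intro k hk
    rw [map_sub, Finsupp.sub_apply, aux_coeff_e hR, Finsupp.single_apply]
    rcases Nat.eq_or_lt_of_le hk with h | h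
    · rw [← h, if_pos rfl, sub_self]
    · rw [hy k (by omega), if_neg (by omega), sub_zero]
  obtain ⟨r, hrlt, hre⟩ := aux_comm hR m (coeff y n)
  have hsplit : x * y = (x - i (coeff x m) * tR ^ m) * y
      + i (coeff x m) * (tR ^ m * (y - i (coeff y n) * tR ^ n))
      + (i (coeff x m * coeff y n) * tR ^ (m + n) + i (coeff x m) * (r * tR ^ n)) := by
    have key : i (coeff x m) * (tR ^ m * (i (coeff y n) * tR ^ n))
        = i (coeff x m * coeff y n) * tR ^ (m + n) + i (coeff x m) * (r * tR ^ n) := by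
      rw [← mul_assoc (tR ^ m), hre, add_mul, mul_add, ← mul_assoc, ← mul_assoc,
        ← map_mul, mul_assoc (i (coeff x m * coeff y n)), ← pow_add]
    rw [← key]
    noncomm_ring
  have c1 := aux_mul_degLt hR hx' hy (m + n) le_rfl
  have c2 := aux_degLt_ia hR (coeff x m)
    (aux_degLt_mono (aux_degLt_tpowmul hR m hy') (by omega : n + m ≤ m + n)) (m + n) le_rfl
  have c3 := aux_degLt_ia hR (coeff x m) (aux_degLt_mul_tpow hR n hrlt) (m + n) le_rfl
  have c4 : coeff (i (coeff x m * coeff y n) * tR ^ (m + n)) (m + n)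
      = coeff x m * coeff y n := by
    rw [aux_coeff_e hR, Finsupp.single_apply, if_pos rfl]
  rw [hsplit]
  simp only [map_add, Finsupp.add_apply]
  rw [c1, c2, c3, c4, zero_add, zero_add, add_zero]

theorem aux_coeff_eq_zero (hc : coeff r = 0) : r = (0 : R) := by
  have := congrArg coeff.symm hc
  rwa [coeff.symm_apply_apply, map_zero] at this

theorem aux_mulf_not (hR : IsDiffPolyRing δ i tR coeff) {p : ℕ} {f u : R}
    (hfp : coeff f p = 1) (hflt : DegLt coeff (p+1) f) (hu : u ≠ 0) :
    ¬ DegLt coeff p (u * f) := by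
  intro hlt
  have hne : coeff u ≠ 0 := fun hc => hu (aux_coeff_eq_zero hc)
  have hsup : (coeff u).support.Nonempty := Finsupp.support_nonempty_iff.2 hne
  set a := (coeff u).support.max' hsup with ha
  have hmem : a ∈ (coeff u).support := (coeff u).support.max'_mem hsup
  have hua : DegLt coeff (a + 1) u := by
    intro k hk
    by_contra hc
    have hk2 : k ∈ (coeff u).support := Finsupp.mem_support_iff.2 hc
    have := (coeff u).support.le_max' k hk2
    omega
  have htop := aux_coeff_mul_top hR hua hflt
  rw [hfp, mul_one, hlt (a + p) (by omega)] at htop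
  exact (Finsupp.mem_support_iff.1 hmem) htop.symm

theorem aux_uniq (hR : IsDiffPolyRing δ i tR coeff) {p : ℕ} {f : R}
    (hfp : coeff f p = 1) (hflt : DegLt coeff (p+1) f)
    {q r q' r' : R} (hrlt : DegLt coeff p r) (hrlt' : DegLt coeff p r')
    (he : q * f + r = q' * f + r') : q = q' ∧ r = r' := by
  have h1 : (q - q') * f = r' - r := by
    rw [sub_mul, sub_eq_sub_iff_add_eq_add, he, add_comm]
  have hq : q = q' := by
    by_contra hc
    exact aux_mulf_not hR hfp hflt (sub_ne_zero.2 hc) (h1 ▸ aux_degLt_sub hrlt' hrlt)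
  refine ⟨hq, ?_⟩
  rw [hq] at he
  exact add_left_cancel he

theorem aux_sum_coeff {D R : Type*} [DivisionRing D] [Ring R]
    {δ : D → D} {i : D →+* R} {tR : R} {coeff : R ≃+ (ℕ →₀ D)}
    (hR : IsDiffPolyRing δ i tR coeff) {p : ℕ} (c : Fin p → D) (n : ℕ) :
    coeff (∑ k : Fin p, i (c k) * tR ^ (k : ℕ)) n = if h : n < p then c ⟨n, h⟩ else 0 := by
  rw [map_sum, Finsupp.finset_sum_apply]
  simp only [aux_coeff_e hR, Finsupp.single_apply]
  by_cases h : n < p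
  · rw [dif_pos h, Finset.sum_eq_single (⟨n, h⟩ : Fin p)]
    · rw [if_pos rfl]
    · intro k _ hk
      rw [if_neg (fun hc => hk (Fin.ext hc))]
    · intro hc
      exact absurd (Finset.mem_univ _) hc
  · rw [dif_neg h]
    exact Finset.sum_eq_zero fun k _ => if_neg (by have := k.isLt; omega)

end More

theorem stmt19_core {D S R : Type*} [DivisionRing D] [Ring R]
    (p : ℕ) (hp : p.Prime)
    [AddCommGroup S] (mul : S → S → S) (one : S)
    (hdistl : ∀ x y z : S, mul x (y + z) = mul x y + mul x z)
    (hdistr : ∀ x y z : S, mul (x + y) z = mul x z + mul y z)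
    (hone : ∀ x : S, mul one x = x ∧ mul x one = x)
    (hdiv : ∀ x : S, x ≠ 0 →
      Function.Bijective (mul x) ∧ Function.Bijective fun y => mul y x)
    (hnonassoc : ∃ x y z : S, mul (mul x y) z ≠ mul x (mul y z))
    (j : D → S) (hjinj : Function.Injective j)
    (hjadd : ∀ a b : D, j (a + b) = j a + j b)
    (hjmul : ∀ a b : D, j (a * b) = mul (j a) (j b)) (hjone : j 1 = one)
    (t : S) (bS : ℕ → S) (hbS0 : bS 0 = one) (hbSs : ∀ k, bS (k+1) = mul t (bS k))
    (hbasis : ∀ x : S, ∃! cc : Fin p → D,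
      x = ∑ k : Fin p, mul (j (cc k)) (bS (k : ℕ)))
    (δ : D → D) (hδdef : ∀ a : D, mul t (j a) = mul (j a) t + j (δ a))
    (hassoc : ∀ (a b c' : D) (iν jν kν : ℕ), iν + jν < p → kν < p →
      mul (mul (mul (j a) (bS iν)) (mul (j b) (bS jν))) (mul (j c') (bS kν)) =
      mul (mul (j a) (bS iν)) (mul (mul (j b) (bS jν)) (mul (j c') (bS kν))))
    (d : D) (hd0 : d ≠ 0) (htp : bS p = t + j d)
    (i : D →+* R) (tR : R) (coeff : R ≃+ (ℕ →₀ D))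
    (hR : IsDiffPolyRing δ i tR coeff)
    (f : R) (hfdef : f = tR ^ p - tR - i d)
    (mulS : R → R → R) (hmulS : IsPetitMul coeff f p mulS) :
    IsDeriv δ ∧
    IrredDeg coeff p f ∧
    (∃ H : S → R, Function.Injective H ∧ Set.range H = SfSet coeff p ∧
      (∀ x y : S, H (x + y) = H x + H y) ∧
      (∀ x y : S, H (mul x y) = mulS (H x) (H y)) ∧
      H one = 1 ∧ H t = tR ∧ ∀ a : D, H (j a) = i a) ∧
    ∀ Haut : R → R, IsAut (F0Set δ) i (SfSet coeff p) mulS Haut →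
      ∃ τ : D ≃+* D, (∀ a : D, Haut (i a) = i (τ a)) ∧ ∀ a ∈ F0Set δ, τ a = a := by
  classical
  have hp2 : 2 ≤ p := hp.two_le
  -- R is nontrivial, i is injective
  have hiinj : Function.Injective i := by
    have hnt : Nontrivial R := by
      refine ⟨coeff.symm (Finsupp.single 0 1), 0, fun hc => ?_⟩
      have h2 := congrArg coeff hc
      rw [coeff.apply_symm_apply, map_zero] at h2
      have h3 := DFunLike.congr_fun h2 0
      simp at h3
    exact i.injective
  -- δ is a derivation
  have hderiv : IsDeriv δ := by
    constructor
    · intro a b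
      apply hiinj
      have e1 : i (δ (a + b)) = tR * i (a + b) - i (a + b) * tR := by rw [hR.1]; abel
      have e2 : i (δ a + δ b) = tR * i (a + b) - i (a + b) * tR := by
        rw [map_add, map_add, mul_add, add_mul, hR.1 a, hR.1 b]; abel
      rw [e1, e2]
    · intro a b
      apply hiinj
      have e2 : tR * (i a * i b) = i a * i b * tR + (i a * i (δ b) + i (δ a) * i b) := by
        rw [← mul_assoc, hR.1 a, add_mul, mul_assoc, hR.1 b, mul_add]
        noncomm_ring
      have e3 := hR.1 (a * b)
      rw [map_mul, e2] at e3
      have e4 := add_left_cancel e3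
      rw [map_add, map_mul, map_mul]
      exact e4.symm
  -- basic S facts
  have mul0r : ∀ x : S, mul x 0 = 0 := fun x => by
    have h := hdistl x 0 0
    rw [add_zero] at h
    exact left_eq_add.1 h
  have mul0l : ∀ x : S, mul 0 x = 0 := fun x => by
    have h := hdistr 0 0 x
    rw [add_zero] at h
    exact left_eq_add.1 h
  have j0 : j 0 = 0 := by
    have h := hjadd 0 0
    rw [add_zero] at h
    exact left_eq_add.1 h
  have Lsum : ∀ (x : S) (g : Fin p → S),
      mul x (∑ k : Fin p, g k) = ∑ k : Fin p, mul x (g k) := fun x g =>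
    map_sum (AddMonoidHom.mk' (mul x) (hdistl x)) g Finset.univ
  have Rsum : ∀ (x : S) (g : Fin p → S),
      mul (∑ k : Fin p, g k) x = ∑ k : Fin p, mul (g k) x := fun x g =>
    map_sum (AddMonoidHom.mk' (fun y => mul y x) (fun a b => hdistr a b x)) g Finset.univ
  -- coordinates
  have hex : ∀ x : S, ∃ c : Fin p → D, x = ∑ k : Fin p, mul (j (c k)) (bS (k : ℕ)) :=
    fun x => (hbasis x).exists
  choose cc hcc using hex
  have hccuniq : ∀ (x : S) (c : Fin p → D),
      x = ∑ k : Fin p, mul (j (c k)) (bS (k : ℕ)) → c = cc x :=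
    fun x c hc => (hbasis x).unique hc (hcc x)
  -- the map H
  set H : S → R := fun x => ∑ k : Fin p, i (cc x k) * tR ^ (k : ℕ) with hHdef
  have hHx : ∀ x, H x = ∑ k : Fin p, i (cc x k) * tR ^ (k : ℕ) := fun x => by rw [hHdef]
  have Hrep : ∀ (x : S) (c : Fin p → D),
      x = ∑ k : Fin p, mul (j (c k)) (bS (k : ℕ)) →
      H x = ∑ k : Fin p, i (c k) * tR ^ (k : ℕ) := by
    intro x c hc
    rw [hHx, hccuniq x c hc]
  have coeffH : ∀ x n, coeff (H x) n = if h : n < p then cc x ⟨n, h⟩ else 0 := fun x n => by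
    rw [hHx]; exact aux_sum_coeff hR _ n
  have HdegLt : ∀ x, DegLt coeff p (H x) := fun x n hn => by
    rw [coeffH, dif_neg (by omega)]
  have Hadd : ∀ x y : S, H (x + y) = H x + H y := by
    intro x y
    have hrep : x + y = ∑ k : Fin p, mul (j (cc x k + cc y k)) (bS (k : ℕ)) := by
      have : ∀ k ∈ Finset.univ, mul (j (cc x k + cc y k)) (bS (k : ℕ))
          = mul (j (cc x k)) (bS (k : ℕ)) + mul (j (cc y k)) (bS (k : ℕ)) := by
        intro k _
        rw [hjadd, hdistr]
      rw [Finset.sum_congr rfl this, Finset.sum_add_distrib]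
      rw [← hcc x, ← hcc y]
    rw [Hrep _ _ hrep, hHx, hHx, ← Finset.sum_add_distrib]
    refine Finset.sum_congr rfl fun k _ => ?_
    rw [map_add, add_mul]
  have Hzero : H 0 = 0 := by
    have h := Hadd 0 0
    rw [add_zero] at h
    exact left_eq_add.1 h
  have Hsum : ∀ g : Fin p → S, H (∑ k : Fin p, g k) = ∑ k : Fin p, H (g k) := fun g =>
    map_sum (AddMonoidHom.mk' H Hadd) g Finset.univ
  have Hbase : ∀ (a : D) (k : ℕ) (hk : k < p), H (mul (j a) (bS k)) = i a * tR ^ k := by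
    intro a k hk
    have hrep : mul (j a) (bS k)
        = ∑ k' : Fin p, mul (j (if k' = (⟨k, hk⟩ : Fin p) then a else 0)) (bS (k' : ℕ)) := by
      rw [Finset.sum_eq_single (⟨k, hk⟩ : Fin p)]
      · rw [if_pos rfl]
      · intro b _ hb
        rw [if_neg hb, j0]
        exact mul0l _
      · intro hc
        exact absurd (Finset.mem_univ _) hc
    rw [Hrep _ _ hrep]
    rw [Finset.sum_eq_single (⟨k, hk⟩ : Fin p)]
    · rw [if_pos rfl]
    · intro b _ hb
      rw [if_neg hb, map_zero, zero_mul]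
    · intro hc
      exact absurd (Finset.mem_univ _) hc
  have hbS1t : bS 1 = t := by
    rw [show (1 : ℕ) = 0 + 1 from rfl, hbSs 0, hbS0]
    exact (hone t).2
  have Hone : H one = 1 := by
    have h1 : one = mul (j 1) (bS 0) := by
      rw [hbS0, hjone]
      exact ((hone one).1).symm
    rw [h1, Hbase 1 0 (by omega), pow_zero, map_one, one_mul]
  have Ht : H t = tR := by
    have h1 : t = mul (j 1) (bS 1) := by
      rw [hbS1t, hjone]
      exact ((hone t).1).symm
    rw [h1, Hbase 1 1 (by omega), pow_one, map_one, one_mul]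
  have Hja : ∀ a : D, H (j a) = i a := by
    intro a
    have h1 : j a = mul (j a) (bS 0) := by
      rw [hbS0]
      exact ((hone (j a)).2).symm
    rw [h1, Hbase a 0 (by omega), pow_zero, mul_one]
  have Hinj : Function.Injective H := by
    intro x y h
    have hk : ∀ k : Fin p, cc x k = cc y k := by
      intro k
      have h1 := congrArg (fun r => coeff r (k : ℕ)) h
      simp only [coeffH, dif_pos k.isLt, Fin.eta] at h1
      exact h1
    rw [hcc x, hcc y]
    exact Finset.sum_congr rfl fun k _ => by rw [hk k]
  have Hrange : Set.range H = SfSet coeff p := by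
    ext r
    constructor
    · rintro ⟨x, rfl⟩
      exact HdegLt x
    · intro hr
      refine ⟨∑ k : Fin p, mul (j (coeff r (k : ℕ))) (bS (k : ℕ)), ?_⟩
      rw [Hrep _ _ rfl]
      apply coeff.injective
      apply Finsupp.ext
      intro n
      rw [aux_sum_coeff hR]
      by_cases hn : n < p
      · rw [dif_pos hn]
      · rw [dif_neg hn]
        exact (hr n (by omega)).symm
  -- facts about f
  have hct : coeff tR = Finsupp.single 1 (1 : D) := by
    rw [show tR = i 1 * tR ^ 1 by rw [map_one, one_mul, pow_one], aux_coeff_e hR]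
  have hctp : coeff (tR ^ p) = Finsupp.single p (1 : D) := by
    rw [show tR ^ p = i 1 * tR ^ p by rw [map_one, one_mul], aux_coeff_e hR]
  have hcia : ∀ a : D, coeff (i a) = Finsupp.single 0 a := fun a => by
    rw [show i a = i a * tR ^ 0 by rw [pow_zero, mul_one], aux_coeff_e hR]
  have hfc : ∀ n, coeff f n = (Finsupp.single p (1 : D)) n - (Finsupp.single 1 (1 : D)) n
      - (Finsupp.single 0 d) n := by
    intro n
    rw [hfdef, map_sub, map_sub, Finsupp.sub_apply, Finsupp.sub_apply, hct, hctp, hcia]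
  have hfp : coeff f p = 1 := by
    rw [hfc, Finsupp.single_eq_same, Finsupp.single_apply, Finsupp.single_apply,
      if_neg (by omega), if_neg (by omega), sub_zero, sub_zero]
  have hfdeg : DegLt coeff (p + 1) f := by
    intro n hn
    rw [hfc, Finsupp.single_apply, Finsupp.single_apply, Finsupp.single_apply,
      if_neg (by omega), if_neg (by omega), if_neg (by omega), sub_zero, sub_zero]
  have hfne : f ≠ 0 := by
    intro hc
    rw [hc, map_zero] at hfp
    exact one_ne_zero hfp.symm
  -- remainder machinery: rem x = mulS x 1
  have hremx : ∀ x : R, ∃ q, x = q * f + mulS x 1 := by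
    intro x
    obtain ⟨q, hq⟩ := (hmulS x 1).2
    rw [mul_one] at hq
    exact ⟨q, hq⟩
  have hrem1 : ∀ x : R, DegLt coeff p (mulS x 1) := fun x => (hmulS x 1).1
  have hremeq : ∀ x r : R, DegLt coeff p r → (∃ q, x = q * f + r) → mulS x 1 = r := by
    rintro x r hrlt ⟨q, hq⟩
    obtain ⟨q', hq'⟩ := hremx x
    exact (aux_uniq hR hfp hfdeg (hrem1 x) hrlt (by rw [← hq', ← hq])).2
  have hmulS_eq : ∀ x y : R, mulS x y = mulS (x * y) 1 := by
    intro x y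
    exact (hremeq (x * y) (mulS x y) (hmulS x y).1 ⟨_, (hmulS x y).2.choose_spec⟩).symm
  have rem_lt : ∀ x : R, DegLt coeff p x → mulS x 1 = x := fun x hx =>
    hremeq x x hx ⟨0, by rw [zero_mul, zero_add]⟩
  have rem_add : ∀ x y : R, mulS (x + y) 1 = mulS x 1 + mulS y 1 := by
    intro x y
    obtain ⟨qx, hqx⟩ := hremx x
    obtain ⟨qy, hqy⟩ := hremx y
    refine hremeq _ _ (aux_degLt_add (hrem1 x) (hrem1 y)) ⟨qx + qy, ?_⟩
    rw [add_mul]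
    calc x + y = qx * f + mulS x 1 + (qy * f + mulS y 1) := by rw [← hqx, ← hqy]
      _ = qx * f + qy * f + (mulS x 1 + mulS y 1) := by abel
  have rem_sub : ∀ x y : R, mulS (x - y) 1 = mulS x 1 - mulS y 1 := by
    intro x y
    obtain ⟨qx, hqx⟩ := hremx x
    obtain ⟨qy, hqy⟩ := hremx y
    refine hremeq _ _ (aux_degLt_sub (hrem1 x) (hrem1 y)) ⟨qx - qy, ?_⟩
    rw [sub_mul]
    calc x - y = qx * f + mulS x 1 - (qy * f + mulS y 1) := by rw [← hqx, ← hqy]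
      _ = qx * f - qy * f + (mulS x 1 - mulS y 1) := by abel
  have rem_sum : ∀ g : Fin p → R, mulS (∑ k : Fin p, g k) 1 = ∑ k : Fin p, mulS (g k) 1 :=
    fun g => map_sum (AddMonoidHom.mk' (fun x => mulS x 1) rem_add) g Finset.univ
  have rem_ia : ∀ (a : D) (x : R), mulS (i a * x) 1 = i a * mulS x 1 := by
    intro a x
    obtain ⟨q, hq⟩ := hremx x
    refine hremeq _ _ (aux_degLt_ia hR a (hrem1 x)) ⟨i a * q, ?_⟩
    calc i a * x = i a * (q * f + mulS x 1) := by rw [← hq]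
      _ = i a * q * f + i a * mulS x 1 := by rw [mul_add, mul_assoc]
  have rem_mulf : ∀ u : R, mulS (u * f) 1 = 0 := fun u =>
    hremeq _ 0 (fun n _ => by rw [map_zero]; rfl) ⟨u, by rw [add_zero]⟩
  have rem_drop : ∀ (x q : R), mulS (x - q * f) 1 = mulS x 1 := by
    intro x q
    obtain ⟨q3, h3⟩ := hremx x
    refine hremeq _ _ (hrem1 x) ⟨q3 - q, ?_⟩
    rw [sub_mul]
    calc x - q * f = q3 * f + mulS x 1 - q * f := by rw [← h3]
      _ = q3 * f - q * f + mulS x 1 := by abel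
  have htpf : tR ^ p = f + tR + i d := by rw [hfdef]; abel
  -- associativity instances
  have assocZ : ∀ (a b : D) (iν jν : ℕ), iν + jν < p → ∀ z : S,
      mul (mul (mul (j a) (bS iν)) (mul (j b) (bS jν))) z
      = mul (mul (j a) (bS iν)) (mul (mul (j b) (bS jν)) z) := by
    intro a b iν jν hij z
    conv_lhs => rw [hcc z]
    conv_rhs => rw [hcc z]
    rw [Lsum, Lsum, Lsum]
    exact Finset.sum_congr rfl fun k _ => hassoc a b (cc z k) iν jν (k : ℕ) hij k.isLt
  have hjabS0 : ∀ a : D, mul (j a) (bS 0) = j a := fun a => by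
    rw [hbS0]; exact (hone (j a)).2
  have hj1bS : ∀ k : ℕ, mul (j 1) (bS k) = bS k := fun k => by
    rw [hjone]; exact (hone _).1
  have A1 : ∀ (a b : D) (z : S), mul (mul (j a) (j b)) z = mul (j a) (mul (j b) z) := by
    intro a b z
    have h := assocZ a b 0 0 (by omega) z
    rwa [hjabS0, hjabS0] at h
  have A2 : ∀ (a : D) (k : ℕ), k < p → ∀ z : S,
      mul (mul (j a) (bS k)) z = mul (j a) (mul (bS k) z) := by
    intro a k hk z
    have h := assocZ a 1 0 k (by omega) z
    rwa [hjabS0, hj1bS] at h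
  have A3 : ∀ m : ℕ, 1 + m < p → ∀ z : S,
      mul (bS (m + 1)) z = mul t (mul (bS m) z) := by
    intro m hm z
    have h := assocZ 1 1 1 m hm z
    rwa [hj1bS, hj1bS, hbS1t, ← hbSs m] at h
  have A4 : ∀ (a : D) (z : S), mul (mul t (j a)) z = mul t (mul (j a) z) := by
    intro a z
    have h := assocZ 1 a 1 0 (by omega) z
    rwa [hj1bS, hjabS0, hbS1t] at h
  have A5 : ∀ (a : D) (z : S), mul (mul (j a) t) z = mul (j a) (mul t z) := by
    intro a z
    have h := assocZ a 1 0 1 (by omega) z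
    rwa [hjabS0, hj1bS, hbS1t] at h
  -- K1
  have K1 : ∀ (a : D) (y : S), H (mul (j a) y) = i a * H y := by
    intro a y
    have hrep : mul (j a) y = ∑ k : Fin p, mul (j (a * cc y k)) (bS (k : ℕ)) := by
      conv_lhs => rw [hcc y]
      rw [Lsum]
      exact Finset.sum_congr rfl fun k _ => by rw [hjmul, A1]
    rw [Hrep _ _ hrep, hHx, Finset.mul_sum]
    exact Finset.sum_congr rfl fun k _ => by rw [map_mul, mul_assoc]
  -- K2
  have K2base : ∀ (a : D) (k : ℕ), k < p →
      H (mul t (mul (j a) (bS k))) = mulS (tR * (i a * tR ^ k)) 1 := by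
    intro a k hk
    have hLHS : mul t (mul (j a) (bS k))
        = mul (j a) (bS (k + 1)) + mul (j (δ a)) (bS k) := by
      rw [← A4, hδdef, hdistr, A5, ← hbSs]
    have hRHS : tR * (i a * tR ^ k) = i a * tR ^ (k + 1) + i (δ a) * tR ^ k := by
      rw [← mul_assoc, hR.1, add_mul, mul_assoc, ← pow_succ']
    rw [hLHS, Hadd, hRHS]
    by_cases hk1 : k + 1 < p
    · rw [Hbase a (k+1) hk1, Hbase (δ a) k hk, rem_lt]
      exact aux_degLt_add (aux_degLt_e hR hk1 a) (aux_degLt_e hR hk (δ a))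
    · have hkp : k + 1 = p := by omega
      rw [hkp, htp, hdistl, ← hjmul, ← hbS1t]
      rw [Hadd, Hbase a 1 (by omega), Hja, Hbase (δ a) k hk]
      rw [rem_add, rem_lt _ (aux_degLt_e hR hk (δ a))]
      have h1 : mulS (i a * tR ^ p) 1 = i a * tR + i (a * d) := by
        refine hremeq _ _ ?_ ⟨i a, ?_⟩
        · have d1 : DegLt coeff p (i a * tR ^ 1) := aux_degLt_e hR (by omega) a
          rw [pow_one] at d1
          have d2 : DegLt coeff p (i (a * d) * tR ^ 0) := aux_degLt_e hR (by omega) _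
          rw [pow_zero, mul_one] at d2
          exact aux_degLt_add d1 d2
        · rw [htpf, mul_add, mul_add, map_mul, add_assoc]
      rw [h1, pow_one]
  have K2 : ∀ y : S, H (mul t y) = mulS (tR * H y) 1 := by
    intro y
    conv_lhs => rw [hcc y]
    rw [Lsum, Hsum, hHx, Finset.mul_sum, rem_sum]
    exact Finset.sum_congr rfl fun k _ => K2base (cc y k) (k : ℕ) k.isLt
  -- K3
  have K3 : ∀ m : ℕ, m < p → ∀ y : S, H (mul (bS m) y) = mulS (tR ^ m * H y) 1 := by
    intro m
    induction m with
    | zero =>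
        intro _ y
        rw [hbS0, (hone y).1, pow_zero, one_mul, rem_lt _ (HdegLt y)]
    | succ m ih =>
        intro hm y
        rw [A3 m (by omega) y, K2, ih (by omega) y]
        obtain ⟨q, hq⟩ := hremx (tR ^ m * H y)
        have h2 : tR * mulS (tR ^ m * H y) 1 = tR ^ (m + 1) * H y - tR * q * f := by
          have h3 : mulS (tR ^ m * H y) 1 = tR ^ m * H y - q * f := by
            rw [eq_sub_iff_add_eq, add_comm, ← hq]
          rw [h3, mul_sub, ← mul_assoc, ← mul_assoc, ← pow_succ']
        rw [h2, rem_drop]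
  -- multiplicativity
  have Hmul : ∀ x y : S, H (mul x y) = mulS (H x) (H y) := by
    intro x y
    rw [hmulS_eq]
    conv_lhs => rw [hcc x]
    rw [Rsum, Hsum]
    have hterm : ∀ k : Fin p, H (mul (mul (j (cc x k)) (bS (k : ℕ))) y)
        = mulS ((i (cc x k) * tR ^ (k : ℕ)) * H y) 1 := by
      intro k
      rw [A2 _ _ k.isLt, K1, K3 _ k.isLt, ← rem_ia, mul_assoc]
    rw [Finset.sum_congr rfl fun k _ => hterm k, ← rem_sum]
    congr 1
    rw [hHx x, Finset.sum_mul]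
  refine ⟨hderiv, ?_, ⟨H, Hinj, Hrange, Hadd, Hmul, Hone, Ht, Hja⟩, ?_⟩
  · -- irreducibility
    rintro ⟨g, h, hfgh, hg, hh⟩
    have hg0 : g ≠ 0 := by
      rintro rfl
      rw [zero_mul] at hfgh
      exact hfne hfgh
    have hh0 : h ≠ 0 := by
      rintro rfl
      rw [mul_zero] at hfgh
      exact hfne hfgh
    have hgr : g ∈ Set.range H := by rw [Hrange]; exact hg
    have hhr : h ∈ Set.range H := by rw [Hrange]; exact hh
    obtain ⟨x, hx⟩ := hgr
    obtain ⟨y, hy⟩ := hhr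
    have hx0 : x ≠ 0 := fun hc => hg0 (by rw [← hx, hc, Hzero])
    have hy0 : y ≠ 0 := fun hc => hh0 (by rw [← hy, hc, Hzero])
    have hrem0 : mulS f 1 = 0 :=
      hremeq f 0 (fun n _ => by rw [map_zero]; rfl) ⟨1, by rw [one_mul, add_zero]⟩
    have hmul0 : H (mul x y) = 0 := by
      rw [Hmul, hx, hy, hmulS_eq, ← hfgh, hrem0]
    have hxy0 : mul x y = 0 := Hinj (by rw [hmul0, Hzero])
    exact hy0 ((hdiv x hx0).1.injective (a₁ := y) (a₂ := 0) (by rw [hxy0, mul0r]))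
  · -- automorphism part
    have SfNA : ∃ u v w : R, mulS (mulS u v) w ≠ mulS u (mulS v w) := by
      obtain ⟨x, y, z, hxyz⟩ := hnonassoc
      refine ⟨H x, H y, H z, fun hc => hxyz (Hinj ?_)⟩
      rw [Hmul, Hmul, Hmul, Hmul, hc]
    have hnotTS : ¬ TwoSidedElem f := by
      intro hTS
      obtain ⟨u, v, w, huvw⟩ := SfNA
      apply huvw
      obtain ⟨q1, hq1⟩ := hremx (u * v)
      obtain ⟨q2, hq2⟩ := hremx (v * w)
      obtain ⟨q1', hq1'⟩ := hTS w
      rw [hmulS_eq u v, hmulS_eq _ w, hmulS_eq v w, hmulS_eq u _]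
      have e1 : mulS (u * v) 1 * w = u * v * w - q1 * q1' * f := by
        have h5 : mulS (u * v) 1 = u * v - q1 * f := by
          rw [eq_sub_iff_add_eq, add_comm, ← hq1]
        rw [h5, sub_mul, mul_assoc q1, hq1', ← mul_assoc]
      have e2 : u * mulS (v * w) 1 = u * (v * w) - u * q2 * f := by
        have h5 : mulS (v * w) 1 = v * w - q2 * f := by
          rw [eq_sub_iff_add_eq, add_comm, ← hq2]
        rw [h5, mul_sub, ← mul_assoc, ← mul_assoc]
      rw [e1, e2, rem_drop, rem_drop, mul_assoc]
    have iaSf : ∀ a : D, DegLt coeff p (i a) := by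
      intro a
      have h := aux_degLt_e hR (show 0 < p by omega) a
      rwa [pow_zero, mul_one] at h
    have iaSf1 : ∀ a : D, DegLt coeff 1 (i a) := by
      intro a
      have h := aux_degLt_e (m := 1) hR (show 0 < 1 by omega) a
      rwa [pow_zero, mul_one] at h
    have midnuc_const : ∀ x : R, DegLt coeff p x →
        (∀ y : R, DegLt coeff p y → ∀ z : R, DegLt coeff p z →
          mulS (mulS y x) z = mulS y (mulS x z)) → ∃ a : D, x = i a := by
      intro x hxS hnuc
      by_cases hx1 : ∀ n, 1 ≤ n → coeff x n = 0
      · refine ⟨coeff x 0, ?_⟩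
        apply coeff.injective
        rw [hcia]
        apply Finsupp.ext
        intro n
        rcases Nat.eq_zero_or_pos n with rfl | hn
        · rw [Finsupp.single_eq_same]
        · rw [hx1 n hn, Finsupp.single_apply, if_neg (by omega)]
      · exfalso
        push_neg at hx1
        obtain ⟨k0, hk01, hk0ne⟩ := hx1
        have hne : coeff x ≠ 0 := fun hc => hk0ne (by rw [hc]; rfl)
        have hsup : (coeff x).support.Nonempty := Finsupp.support_nonempty_iff.2 hne
        set k := (coeff x).support.max' hsup with hkdef
        have hmem : k ∈ (coeff x).support := (coeff x).support.max'_mem hsup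
        have hk1 : 1 ≤ k :=
          le_trans hk01 ((coeff x).support.le_max' k0 (Finsupp.mem_support_iff.2 hk0ne))
        have hkp : k < p := by
          by_contra hc
          exact (Finsupp.mem_support_iff.1 hmem) (hxS k (by omega))
        have hxk : DegLt coeff (k + 1) x := by
          intro n hn
          by_contra hc
          have := (coeff x).support.le_max' n (Finsupp.mem_support_iff.2 hc)
          omega
        set u := coeff x k with hudef
        have hu0 : u ≠ 0 := Finsupp.mem_support_iff.1 hmem
        obtain ⟨r, hrlt, hre⟩ := aux_comm hR (p - k) u
        have hx' : DegLt coeff k (x - i u * tR ^ k) := by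
          intro n hn
          rw [map_sub, Finsupp.sub_apply, aux_coeff_e hR, Finsupp.single_apply]
          rcases Nat.eq_or_lt_of_le hn with h | h
          · rw [← h, if_pos rfl, sub_self]
          · rw [hxk n (by omega), if_neg (by omega), sub_zero]
        set w := r * tR ^ k + tR ^ (p - k) * (x - i u * tR ^ k) with hwdef
        have hwlt : DegLt coeff p w := by
          have h1 : DegLt coeff (p - k + k) (r * tR ^ k) := aux_degLt_mul_tpow hR k hrlt
          have h2 : DegLt coeff (k + (p - k)) (tR ^ (p - k) * (x - i u * tR ^ k)) :=
            aux_degLt_tpowmul hR (p - k) hx'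
          exact aux_degLt_add (aux_degLt_mono h1 (by omega)) (aux_degLt_mono h2 (by omega))
        have hdec : tR ^ (p - k) * x = i u * tR ^ p + w := by
          have h3 : tR ^ (p - k) * x
              = tR ^ (p - k) * (i u * tR ^ k) + tR ^ (p - k) * (x - i u * tR ^ k) := by
            rw [← mul_add]
            congr 1
            abel
          rw [h3, ← mul_assoc, hre, add_mul, mul_assoc, ← pow_add,
            Nat.sub_add_cancel (by omega), hwdef]
          abel
        have hv : tR ^ (p - k) * x = i u * f + (i u * tR + i u * i d + w) := by
          rw [hdec, htpf, mul_add, mul_add]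
          abel
        have hvlt : DegLt coeff p (i u * tR + i u * i d + w) := by
          have d1 : DegLt coeff p (i u * tR ^ 1) := aux_degLt_e hR (by omega) u
          rw [pow_one] at d1
          have d2 : DegLt coeff p (i u * i d) := aux_degLt_ia hR u (iaSf d)
          exact aux_degLt_add (aux_degLt_add d1 d2) hwlt
        have hMyx : mulS (tR ^ (p - k) * x) 1 = i u * tR + i u * i d + w :=
          hremeq _ _ hvlt ⟨i u, hv⟩
        have hyS : DegLt coeff p (tR ^ (p - k)) := by
          have h := aux_degLt_e hR (show p - k < p by omega) (1 : D)
          rwa [map_one, one_mul] at h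
        have hfz : ∀ z : R, DegLt coeff p z → mulS (f * z) 1 = 0 := by
          intro z hz
          have hnz := hnuc (tR ^ (p - k)) hyS z hz
          obtain ⟨qz, hqz⟩ := hremx (x * z)
          -- RHS of hnz
          have hRHS : mulS (tR ^ (p - k)) (mulS x z) = mulS (tR ^ (p - k) * (x * z)) 1 := by
            rw [hmulS_eq x z, hmulS_eq]
            have h5 : mulS (x * z) 1 = x * z - qz * f := by
              rw [eq_sub_iff_add_eq, add_comm, ← hqz]
            rw [h5, mul_sub, ← mul_assoc (tR ^ (p - k)) qz f, rem_drop]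
          -- LHS of hnz
          have hLHS : mulS (mulS (tR ^ (p - k)) x) z
              = mulS (tR ^ (p - k) * (x * z)) 1 - i u * mulS (f * z) 1 := by
            rw [hmulS_eq (tR ^ (p - k)) x, hMyx, hmulS_eq]
            have h6 : (i u * tR + i u * i d + w) * z
                = tR ^ (p - k) * (x * z) - i u * (f * z) := by
              have h7 : i u * tR + i u * i d + w = tR ^ (p - k) * x - i u * f := by
                rw [hv]; abel
              rw [h7, sub_mul, mul_assoc, mul_assoc]
            rw [h6, rem_sub, rem_ia]
          rw [hLHS, hRHS] at hnz
          have h8 : i u * mulS (f * z) 1 = 0 := by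
            have h9 := sub_eq_iff_eq_add.1 hnz
            have h10 : mulS (tR ^ (p - k) * (x * z)) 1
                = mulS (tR ^ (p - k) * (x * z)) 1 + i u * mulS (f * z) 1 := by
              conv_lhs => rw [h9]
            exact (left_eq_add.1 h10)
          have h11 : mulS (f * z) 1 = i u⁻¹ * (i u * mulS (f * z) 1) := by
            rw [← mul_assoc, ← map_mul, inv_mul_cancel₀ hu0, map_one, one_mul]
          rw [h11, h8, mul_zero]
        apply hnotTS
        intro rr
        obtain ⟨qr, hqr⟩ := hremx rr
        obtain ⟨qq, hqq⟩ := hremx (f * mulS rr 1)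
        have h12 : f * mulS rr 1 = qq * f := by
          rw [hfz (mulS rr 1) (hrem1 rr), add_zero] at hqq
          exact hqq
        refine ⟨f * qr + qq, ?_⟩
        calc f * rr = f * (qr * f + mulS rr 1) := by rw [← hqr]
          _ = f * qr * f + f * mulS rr 1 := by rw [mul_add, mul_assoc]
          _ = f * qr * f + qq * f := by rw [h12]
          _ = (f * qr + qq) * f := by rw [add_mul]
    have const_midnuc : ∀ (a : D) (y : R), DegLt coeff p y → ∀ z : R, DegLt coeff p z →
        mulS (mulS y (i a)) z = mulS y (mulS (i a) z) := by
      intro a y hy z hz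
      have h1 : mulS y (i a) = y * i a := by
        rw [hmulS_eq]
        apply rem_lt
        have h := aux_mul_degLt hR hy (iaSf1 a)
        exact aux_degLt_mono h (by omega)
      have h2 : mulS (i a) z = i a * z := by
        rw [hmulS_eq]
        exact rem_lt _ (aux_degLt_ia hR a hz)
      rw [h1, h2, hmulS_eq (y * i a) z, hmulS_eq y (i a * z), mul_assoc]
    intro Haut hAut
    obtain ⟨hbij, haddH, hmulH, honeH, hFH⟩ := hAut
    have hSmem : ∀ x y : R, mulS x y ∈ SfSet coeff p := fun x y => (hmulS x y).1
    have hmapsTo := hbij.mapsTo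
    have hconst : ∀ a : D, ∃ b : D, Haut (i a) = i b := by
      intro a
      apply midnuc_const (Haut (i a)) (hmapsTo (iaSf a))
      intro y hy z hz
      obtain ⟨y', hy', hyy⟩ := hbij.surjOn hy
      obtain ⟨z', hz', hzz⟩ := hbij.surjOn hz
      rw [← hyy, ← hzz, ← hmulH y' hy' (i a) (iaSf a),
        ← hmulH _ (hSmem y' (i a)) z' hz', ← hmulH (i a) (iaSf a) z' hz',
        ← hmulH y' hy' _ (hSmem (i a) z'), const_midnuc a y' hy' z' hz']
    choose τ0 hτ0 using hconst
    have hτadd : ∀ a b : D, τ0 (a + b) = τ0 a + τ0 b := by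
      intro a b
      apply hiinj
      rw [map_add, ← hτ0, ← hτ0, ← hτ0, map_add, haddH (i a) (iaSf a) (i b) (iaSf b)]
    have hiab : ∀ a b : D, mulS (i a) (i b) = i (a * b) := by
      intro a b
      rw [hmulS_eq, ← map_mul]
      exact rem_lt _ (iaSf _)
    have hτmul : ∀ a b : D, τ0 (a * b) = τ0 a * τ0 b := by
      intro a b
      apply hiinj
      rw [← hτ0, ← hiab, hmulH (i a) (iaSf a) (i b) (iaSf b), hτ0, hτ0]
      exact hiab _ _
    have hτone : τ0 1 = 1 := by
      apply hiinj
      rw [← hτ0, map_one, honeH]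
    have hτinj : Function.Injective τ0 := by
      intro a b hab
      have h := hτ0 a
      rw [hab, ← hτ0 b] at h
      exact hiinj (hbij.injOn (iaSf a) (iaSf b) h)
    have hτsurj : Function.Surjective τ0 := by
      intro b
      obtain ⟨x, hxS, hxb⟩ := hbij.surjOn (iaSf b)
      have hmid : ∀ y : R, DegLt coeff p y → ∀ z : R, DegLt coeff p z →
          mulS (mulS y x) z = mulS y (mulS x z) := by
        intro y hy z hz
        apply hbij.injOn (hSmem _ _) (hSmem _ _)
        rw [hmulH _ (hSmem y x) z hz, hmulH y hy x hxS, hxb,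
          hmulH y hy _ (hSmem x z), hmulH x hxS z hz, hxb,
          const_midnuc b (Haut y) (hmapsTo hy) (Haut z) (hmapsTo hz)]
      obtain ⟨a, rfl⟩ := midnuc_const x hxS hmid
      exact ⟨a, hiinj (by rw [← hτ0, hxb])⟩
    refine ⟨RingEquiv.ofBijective (RingHom.mk' ⟨⟨τ0, hτone⟩, hτmul⟩ hτadd)
      ⟨hτinj, hτsurj⟩, fun a => hτ0 a, fun a ha => ?_⟩
    apply hiinj
    show i (τ0 a) = i a
    have h1S : (1 : R) ∈ SfSet coeff p := by
      have h := iaSf (1 : D)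
      rwa [map_one] at h
    have h := hFH a ha 1 h1S
    rw [mul_one, honeH, mul_one] at h
    rw [← hτ0 a]
    exact h





/-- classification of nonassociative cyclic extensions of `D` of
degree `p`: if `(S,∘)` is a nonassociative division ring containing `D`, free
as a left `D`-module with basis `1, t, …, t^{p−1}` (where `t^{i+1} = t∘tⁱ`),
satisfying conditions (2), (3), (4), then `δ(a) := t∘a − a∘t` is a derivation
of `D`, the polynomial `f(t) = t^p − t − d ∈ D[t;δ]` is irreducible,
`S ≅ S_f`, and every `H ∈ Aut_F(S_f)` restricts to an automorphism of `D`. -/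
theorem stmt_19 {D S R : Type*} [DivisionRing D] [Ring R]
    (p : ℕ) (hp : p.Prime) [CharP D p]
    [AddCommGroup S] (mul : S → S → S) (one : S)
    -- (S,∘) is a unital nonassociative division ring
    (hdistl : ∀ x y z : S, mul x (y + z) = mul x y + mul x z)
    (hdistr : ∀ x y z : S, mul (x + y) z = mul x z + mul y z)
    (hone : ∀ x : S, mul one x = x ∧ mul x one = x)
    (hdiv : ∀ x : S, x ≠ 0 →
      Function.Bijective (mul x) ∧ Function.Bijective fun y => mul y x)
    (hnonassoc : ∃ x y z : S, mul (mul x y) z ≠ mul x (mul y z))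
    -- D is a subring of S
    (j : D → S) (hjinj : Function.Injective j)
    (hjadd : ∀ a b : D, j (a + b) = j a + j b)
    (hjmul : ∀ a b : D, j (a * b) = mul (j a) (j b)) (hjone : j 1 = one)
    (t : S)
    -- (1) S is a free left D-module with basis 1, t, t², …, t^{p−1},
    --     where t⁰ = 1 and t^{i+1} = t ∘ tⁱ
    (hbasis : ∀ x : S, ∃! cc : Fin p → D,
      x = ∑ k : Fin p, mul (j (cc k)) ((fun y => mul t y)^[(k : ℕ)] one))
    -- (2) for every a ∈ D there is a' = δ(a) ∈ D with t∘a = a∘t + a'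
    (δ : D → D) (hδdef : ∀ a : D, mul t (j a) = mul (j a) t + j (δ a))
    -- (3) the associators [a∘tⁱ, b∘tʲ, c∘tᵏ] vanish for i+j < p, k < p
    (hassoc : ∀ (a b c' : D) (iν jν kν : ℕ), iν + jν < p → kν < p →
      mul (mul (mul (j a) ((fun y => mul t y)^[iν] one))
               (mul (j b) ((fun y => mul t y)^[jν] one)))
          (mul (j c') ((fun y => mul t y)^[kν] one)) =
      mul (mul (j a) ((fun y => mul t y)^[iν] one))
          (mul (mul (j b) ((fun y => mul t y)^[jν] one))
               (mul (j c') ((fun y => mul t y)^[kν] one))))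
    -- (4) t^p = t + d for some nonzero d ∈ D
    (d : D) (hd0 : d ≠ 0) (htp : (fun y => mul t y)^[p] one = t + j d)
    -- R = D[t;δ] and the Petit algebra S_f, f = t^p − t − d
    (i : D →+* R) (tR : R) (coeff : R ≃+ (ℕ →₀ D))
    (hR : IsDiffPolyRing δ i tR coeff)
    (f : R) (hfdef : f = tR ^ p - tR - i d)
    (mulS : R → R → R) (hmulS : IsPetitMul coeff f p mulS) :
    -- δ is a derivation on D
    IsDeriv δ ∧
    -- f is irreducible
    IrredDeg coeff p f ∧
    -- S ≅ S_f
    (∃ H : S → R, Function.Injective H ∧ Set.range H = SfSet coeff p ∧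
      (∀ x y : S, H (x + y) = H x + H y) ∧
      (∀ x y : S, H (mul x y) = mulS (H x) (H y)) ∧
      H one = 1 ∧ H t = tR ∧ ∀ a : D, H (j a) = i a) ∧
    -- every H ∈ Aut_F(S_f) restricts to an automorphism of D fixing F
    ∀ Haut : R → R, IsAut (F0Set δ) i (SfSet coeff p) mulS Haut →
      ∃ τ : D ≃+* D, (∀ a : D, Haut (i a) = i (τ a)) ∧ ∀ a ∈ F0Set δ, τ a = a := by
  exact stmt19_core p hp mul one hdistl hdistr hone hdiv hnonassoc j hjinj hjadd hjmul
    hjone t (fun k => (fun y => mul t y)^[k] one) rfl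
    (fun k => Function.iterate_succ_apply' _ k one) hbasis δ hδdef hassoc d hd0 htp
    i tR coeff hR f hfdef mulS hmulS
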